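/- Suppose s_f − s₀ = (v₀ + v_f)/2, a > 0, and |v_f − v₀| > a. Then the pair (u_𝒜, u_ℬ) consisting of the constant functions u_ℬ(t) = sgn(v_f − v₀)·a and u_𝒜(t) = v_f − v₀ for all t ∈ [0,1] is a best approximation pair for 𝒜 and ℬ; in particular, the best approximation control in ℬ is the constant a if v_f − v₀ > a and the constant −a if v_f − v₀ < −a. -/

import Mathlib

open MeasureTheory

/-- The measure on ℝ representing integration over the interval [0,1]. -/
noncomputable def mu01 : Measure ℝ := volume.restrict (Set.Icc 0 1)

/-- The affine set 𝒜 of controls in L²([0,1],ℝ) steering the double integrator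
from (s₀, v₀) to (s_f, v_f). -/
def setA (s0 sf v0 vf : ℝ) : Set (Lp ℝ 2 mu01) :=
  {u | (∫ t, u t ∂mu01) = vf - v0 ∧ (∫ t, (1 - t) * u t ∂mu01) = sf - s0 - v0}

/-- The box ℬ of controls bounded in absolute value by `a` a.e. on [0,1]. -/
def setB (a : ℝ) : Set (Lp ℝ 2 mu01) :=
  {u | ∀ᵐ t ∂mu01, |u t| ≤ a}

instance : IsProbabilityMeasure mu01 := by
  constructor
  rw [mu01, Measure.restrict_apply_univ, Real.volume_Icc]
  norm_num

lemma mu01_ne_zero : mu01 ≠ 0 := IsProbabilityMeasure.ne_zero mu01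

/-- constant function as an element of L². -/
noncomputable def cst (c : ℝ) : Lp ℝ 2 mu01 := (memLp_const c).toLp (fun _ => c)

lemma cst_coe (c : ℝ) : (cst c : ℝ → ℝ) =ᵐ[mu01] fun _ => c :=
  MemLp.coeFn_toLp _

lemma integrable_L2 (f : Lp ℝ 2 mu01) : Integrable f mu01 :=
  (Lp.memLp f).integrable (by norm_num)

lemma integral_cst (c : ℝ) : (∫ t, (cst c) t ∂mu01) = c := by
  rw [integral_congr_ae (cst_coe c), integral_const]
  simp

lemma norm_cst (c : ℝ) : ‖cst c‖ = |c| := by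
  rw [Lp.norm_def, eLpNorm_congr_ae (cst_coe c),
    eLpNorm_const c (by norm_num) mu01_ne_zero]
  simp [Real.norm_eq_abs]

lemma abs_integral_le_norm (f : Lp ℝ 2 mu01) : |∫ t, f t ∂mu01| ≤ ‖f‖ := by
  have h1 : (inner ℝ f (cst 1) : ℝ) = ∫ t, f t ∂mu01 := by
    rw [L2.inner_def]
    refine integral_congr_ae ?_
    filter_upwards [cst_coe 1] with t ht
    simp [ht, RCLike.inner_apply]
  have h2 := abs_real_inner_le_norm f (cst 1)
  rw [h1, norm_cst] at h2
  simpa using h2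

/-- Best approximation solution for the infeasible problem in the case
s_f - s₀ = (v₀+v_f)/2: the controls u_ℬ ≡ sgn(v_f - v₀)·a and u_𝒜 ≡ v_f - v₀
form a best approximation pair. -/
theorem stmt_9 (s0 sf v0 vf a : ℝ) (ha : 0 < a)
    (hs : sf - s0 = (v0 + vf) / 2) (hbig : |vf - v0| > a) :
    ∃ uA uB : Lp ℝ 2 mu01,
      (∀ᵐ t ∂mu01, uB t = Real.sign (vf - v0) * a) ∧
      (∀ᵐ t ∂mu01, uA t = vf - v0) ∧
      uA ∈ setA s0 sf v0 vf ∧ uB ∈ setB a ∧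
      (∀ x ∈ setA s0 sf v0 vf, ∀ y ∈ setB a, ‖uA - uB‖ ≤ ‖x - y‖) ∧
      (vf - v0 > a → ∀ᵐ t ∂mu01, uB t = a) ∧
      (vf - v0 < -a → ∀ᵐ t ∂mu01, uB t = -a) := by
  set c := vf - v0 with hc
  have hcne : c ≠ 0 := by
    intro h; rw [h] at hbig; simp at hbig; linarith
  set d := Real.sign c * a with hd
  refine ⟨cst c, cst d, cst_coe d, cst_coe c, ?_, ?_, ?_, ?_, ?_⟩
  · -- uA ∈ setA
    constructor
    · exact integral_cst c
    · have : (∫ t, (1 - t) * (cst c) t ∂mu01) = ∫ t, (1 - t) * c ∂mu01 := by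
        refine integral_congr_ae ?_
        filter_upwards [cst_coe c] with t ht
        rw [ht]
      rw [this]
      have : (∫ t, (1 - t) * c ∂mu01) = c / 2 := by
        rw [mu01]
        rw [MeasureTheory.integral_Icc_eq_integral_Ioc,
          ← intervalIntegral.integral_of_le (by norm_num : (0:ℝ) ≤ 1)]
        have : (∫ x in (0:ℝ)..1, (1 - x) * c) = c / 2 := by
          simp [intervalIntegral.integral_comp_mul_right, sub_mul,
            intervalIntegral.integral_sub (intervalIntegrable_const)
              (IntervalIntegrable.mul_const (intervalIntegral.intervalIntegrable_id) c),
            intervalIntegral.integral_mul_const]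
          ring
        rw [this]
      rw [this]; rw [hc]; linarith
  · -- uB ∈ setB
    filter_upwards [cst_coe d] with t ht
    rw [ht, hd, abs_mul]
    rcases hcne.lt_or_gt with h | h
    · rw [Real.sign_of_neg h]; simp [abs_of_pos ha]
    · rw [Real.sign_of_pos h]; simp [abs_of_pos ha]
  · -- best approximation
    intro x hx y hy
    have hnorm : ‖cst c - cst d‖ = |c - d| := by
      have hcoe : ((cst c - cst d : Lp ℝ 2 mu01) : ℝ → ℝ) =ᵐ[mu01] fun _ => c - d := by
        filter_upwards [Lp.coeFn_sub (cst c) (cst d), cst_coe c, cst_coe d] with t h1 h2 h3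
        rw [h1, Pi.sub_apply, h2, h3]
      rw [Lp.norm_def, eLpNorm_congr_ae hcoe,
        eLpNorm_const _ (by norm_num) mu01_ne_zero]
      simp [Real.norm_eq_abs]
    have hIy : |∫ t, y t ∂mu01| ≤ a := by
      have := norm_integral_le_of_norm_le (f := (y : ℝ → ℝ)) (g := fun _ => a)
        (integrable_const a) (by filter_upwards [hy] with t ht; simpa [Real.norm_eq_abs] using ht)
      simpa [Real.norm_eq_abs] using this
    have hIxy : (∫ t, (x - y : Lp ℝ 2 mu01) t ∂mu01) = c - ∫ t, y t ∂mu01 := by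
      have : (∫ t, (x - y : Lp ℝ 2 mu01) t ∂mu01) = ∫ t, (x t - y t) ∂mu01 := by
        refine integral_congr_ae ?_
        filter_upwards [Lp.coeFn_sub x y] with t h1
        rw [h1, Pi.sub_apply]
      rw [this, integral_sub (integrable_L2 x) (integrable_L2 y), hx.1]
    have hle : |c| - a ≤ ‖x - y‖ := by
      have h1 := abs_integral_le_norm (x - y)
      rw [hIxy] at h1
      have h2 : |c| - a ≤ |c - ∫ t, y t ∂mu01| := by
        have := abs_sub_abs_le_abs_sub c (∫ t, y t ∂mu01)
        linarith [hIy, this]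
      linarith
    rw [hnorm]
    have : |c - d| = |c| - a := by
      rcases hcne.lt_or_gt with h | h
      · rw [hd, Real.sign_of_neg h]
        have hca : c + a < 0 := by
          rw [abs_of_neg h] at hbig; linarith
        rw [abs_of_neg h]
        rw [show c - -1 * a = c + a by ring, abs_of_neg hca]; ring
      · rw [hd, Real.sign_of_pos h]
        have hca : 0 < c - a := by
          rw [abs_of_pos h] at hbig; linarith
        rw [abs_of_pos h, show c - 1 * a = c - a by ring, abs_of_pos hca]
    linarith
  · -- c > a case
    intro h
    filter_upwards [cst_coe d] with t ht
    rw [ht, hd, Real.sign_of_pos (by linarith : (0:ℝ) < c), one_mul]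
  · -- c < -a case
    intro h
    filter_upwards [cst_coe d] with t ht
    rw [ht, hd, Real.sign_of_neg (by linarith : c < 0)]
    ring
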